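/- Let T be a closed densely defined operator on a Hilbert space. Then for every x in the Hilbert space, (1+T*T)^{-1/2} x = (1/π) ∫₁^∞ (µ-1)^{-1/2} (µ+T*T)^{-1} x dµ, where the integral converges in norm. -/

import Mathlib

open scoped InnerProductSpace

set_option linter.unusedSectionVars false
set_option linter.unusedVariables false
set_option maxHeartbeats 1000000

/-- Weak characterization of the resolvent `(mu + T*T)⁻¹` of a closed densely
defined operator `T`: `R x` lies in `dom T` and satisfies
`⟪T (R x), T y⟫ + mu ⟪R x, y⟫ = ⟪x, y⟫` for all `y ∈ dom T`. -/
def IsResolvent {E F : Type*} [NormedAddCommGroup E] [InnerProductSpace ℂ E]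
    [NormedAddCommGroup F] [InnerProductSpace ℂ F]
    (T : E →ₗ.[ℂ] F) (mu : ℝ) (R : E →L[ℂ] E) : Prop :=
  ∀ x : E, ∃ h : R x ∈ T.domain,
    ∀ y : T.domain, ⟪T ⟨R x, h⟩, T y⟫_ℂ + (mu : ℂ) * ⟪R x, (y : E)⟫_ℂ = ⟪x, (y : E)⟫_ℂ

/-- `R` is the positive square root `(mu + T*T)^(-1/2)` of the resolvent:
`R` is self-adjoint, nonnegative, and `R * R` is the resolvent `(mu + T*T)⁻¹`. -/
def IsSqrtResolvent {E F : Type*} [NormedAddCommGroup E] [InnerProductSpace ℂ E]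
    [NormedAddCommGroup F] [InnerProductSpace ℂ F]
    (T : E →ₗ.[ℂ] F) (mu : ℝ) (R : E →L[ℂ] E) : Prop :=
  (∀ x y : E, ⟪R x, y⟫_ℂ = ⟪x, R y⟫_ℂ) ∧ (∀ x : E, 0 ≤ (⟪R x, x⟫_ℂ).re) ∧
    IsResolvent T mu (R * R)

section ResolventLemmas
variable {H : Type*} [NormedAddCommGroup H] [InnerProductSpace ℂ H] [CompleteSpace H]
  {T : H →ₗ.[ℂ] H} {mu nu : ℝ} {R R' : H →L[ℂ] H}

lemma res_pairing (h : IsResolvent T mu R) (h' : IsResolvent T mu R') (x z : H) :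
    ⟪x, R' z⟫_ℂ = ⟪R x, z⟫_ℂ := by
  obtain ⟨hx, Hx⟩ := h x
  obtain ⟨hz, Hz⟩ := h' z
  have e1 : ⟪T ⟨R x, hx⟩, T ⟨R' z, hz⟩⟫_ℂ + (mu : ℂ) * ⟪R x, R' z⟫_ℂ = ⟪x, R' z⟫_ℂ :=
    Hx ⟨R' z, hz⟩
  have e2 := congrArg (starRingEnd ℂ) (Hz ⟨R x, hx⟩)
  simp only [map_add, map_mul, inner_conj_symm, Complex.conj_ofReal] at e2
  exact e1.symm.trans e2

lemma res_unique (h : IsResolvent T mu R) (h' : IsResolvent T mu R') : R = R' := by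
  ext z
  refine ext_inner_left ℂ fun v => ?_
  rw [res_pairing h h v z, res_pairing h h' v z]

lemma res_id (h : IsResolvent T mu R) (h' : IsResolvent T nu R') (x : H) :
    ((mu - nu : ℝ)) • R' (R x) = R' x - R x := by
  refine ext_inner_right ℂ fun z => ?_
  obtain ⟨hx, Hx⟩ := h x
  obtain ⟨hz, Hz⟩ := h' z
  have e1 : ⟪T ⟨R x, hx⟩, T ⟨R' z, hz⟩⟫_ℂ + (mu : ℂ) * ⟪R x, R' z⟫_ℂ = ⟪x, R' z⟫_ℂ :=
    Hx ⟨R' z, hz⟩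
  have e2 := congrArg (starRingEnd ℂ) (Hz ⟨R x, hx⟩)
  simp only [map_add, map_mul, inner_conj_symm, Complex.conj_ofReal] at e2
  have e3 : ((mu : ℂ) - nu) * ⟪R x, R' z⟫_ℂ = ⟪x, R' z⟫_ℂ - ⟪R x, z⟫_ℂ := by
    rw [← e1, ← e2]; ring
  have p1 := res_pairing h' h' (R x) z
  have p2 := res_pairing h' h' x z
  have hsmul : ((mu - nu : ℝ)) • R' (R x) = ((mu : ℂ) - (nu : ℂ)) • R' (R x) := by
    norm_cast
  rw [hsmul, inner_smul_left, inner_sub_left, ← p1, ← p2, ← e3]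
  simp [mul_comm]

end ResolventLemmas

open MeasureTheory Set Real

noncomputable def Ffun (t r : ℝ) : ℝ := 2 * (r / (1 + t^2 * r))

lemma Fden_pos (t r : ℝ) (hr : 0 ≤ r) : 0 < 1 + t^2*r := by positivity

lemma scalar_int {r : ℝ} (hr : 0 ≤ r) :
    ∫ t in Ioi (0:ℝ), Ffun t r = Real.pi * Real.sqrt r := by
  rcases eq_or_lt_of_le hr with h0 | h0
  · simp [Ffun, ← h0]
  · have hs : 0 < Real.sqrt r := Real.sqrt_pos.mpr h0
    have key : ∀ t : ℝ, Ffun t r = (2*r) * (fun u => (1 + u^2)⁻¹) (Real.sqrt r * t) := by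
      intro t
      have h2 : (Real.sqrt r * t)^2 = t^2 * r := by
        rw [mul_pow, Real.sq_sqrt hr]; ring
      simp only [Ffun, h2, div_eq_mul_inv]; ring
    calc ∫ t in Ioi (0:ℝ), Ffun t r
        = ∫ t in Ioi (0:ℝ), (2*r) * (fun u => (1 + u^2)⁻¹) (Real.sqrt r * t) := by
          simp only [key]
      _ = (2*r) * ∫ t in Ioi (0:ℝ), (fun u => (1 + u^2)⁻¹) (Real.sqrt r * t) := by
          rw [MeasureTheory.integral_const_mul]
      _ = (2*r) * ((Real.sqrt r)⁻¹ * (Real.pi/2)) := by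
          rw [MeasureTheory.integral_comp_mul_left_Ioi (fun u => (1 + u^2)⁻¹) 0 hs]
          simp [integral_Ioi_inv_one_add_sq, smul_eq_mul]
      _ = Real.pi * Real.sqrt r := by
          rw [show (2*r : ℝ) = 2*(Real.sqrt r * Real.sqrt r) by rw [Real.mul_self_sqrt hr]]
          field_simp

section Core
variable {H : Type*} [NormedAddCommGroup H] [InnerProductSpace ℂ H] [CompleteSpace H]

lemma spec_nonneg (B : H →L[ℂ] H) (hB0 : 0 ≤ B) : ∀ r ∈ spectrum ℝ B, 0 ≤ r :=
  fun r hr => spectrum_nonneg_of_nonneg hB0 hr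

lemma Ffun_contOn (B : H →L[ℂ] H) (hB0 : 0 ≤ B) (t : ℝ) :
    ContinuousOn (Ffun t) (spectrum ℝ B) := by
  apply ContinuousOn.mul continuousOn_const
  exact ContinuousOn.div continuousOn_id (by fun_prop)
    (fun r hr => (Fden_pos t r (spec_nonneg B hB0 r hr)).ne')

lemma core_mul (B : H →L[ℂ] H) (hBsa : IsSelfAdjoint B) (hB0 : 0 ≤ B) (t : ℝ) :
    cfc (Ffun t) B * (1 + t^2 • B) = (2:ℝ) • B ∧
      cfc (Ffun t) B * B = B * cfc (Ffun t) B := by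
  have hcont := Ffun_contOn B hB0 t
  have haff : cfc (fun r : ℝ => 1 + t^2 * r) B = 1 + t^2 • B := by
    rw [cfc_const_add (1:ℝ) (fun r => t^2 * r) B (by fun_prop) hBsa, map_one,
      cfc_const_mul (t^2) (fun r : ℝ => r) B (by fun_prop), cfc_id' ℝ B]
  constructor
  · rw [← haff, ← cfc_mul (Ffun t) (fun r : ℝ => 1 + t^2*r) B hcont (by fun_prop)]
    have h2 : cfc (fun x : ℝ => Ffun t x * (1 + t^2 * x)) B = cfc (fun x : ℝ => 2 * x) B := by
      apply cfc_congr
      intro r hr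
      have h1 := Fden_pos t r (spec_nonneg B hB0 r hr)
      simp only [Ffun]; field_simp
      exact mul_div_cancel_right₀ r (by rw [mul_comm]; exact h1.ne')
    rw [h2, cfc_const_mul (2:ℝ) (fun r : ℝ => r) B (by fun_prop), cfc_id' ℝ B]
  · have h1 := cfc_mul (R := ℝ) (Ffun t) (fun r => r) B hcont (by fun_prop)
    have h2 := cfc_mul (R := ℝ) (fun r => r) (Ffun t) B (by fun_prop) hcont
    rw [cfc_id' ℝ B] at h1 h2
    rw [← h1, ← h2]
    congr 1
    ext r
    ring

lemma core_int [Nontrivial H] (B : H →L[ℂ] H) (hBsa : IsSelfAdjoint B) (hB0 : 0 ≤ B) :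
    Integrable (fun t : ℝ => cfc (Ffun t) B) (volume.restrict (Ioi 0)) ∧
    ∫ t in Ioi (0:ℝ), cfc (Ffun t) B = Real.pi • cfc Real.sqrt B := by
  set M := ‖B‖ with hM
  have hFcont : Continuous (fun p : ℝ × (spectrum ℝ B) => Ffun p.1 (p.2 : ℝ)) := by
    apply Continuous.mul continuous_const
    apply Continuous.div (by fun_prop) (by fun_prop)
    exact fun p => (Fden_pos p.1 p.2 (spec_nonneg B hB0 p.2 p.2.2)).ne'
  set Fc : C(ℝ, C(spectrum ℝ B, ℝ)) := ContinuousMap.curry ⟨_, hFcont⟩ with hFcdef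
  have hFc_eq : ∀ t : ℝ, cfc (Ffun t) B = cfcL (R := ℝ) (a := B) hBsa (Fc t) := by
    intro t
    rw [cfc_apply (Ffun t) B hBsa (Ffun_contOn B hB0 t)]
    simp only [cfcL_apply]
    exact congrArg _ (ContinuousMap.ext fun r => rfl)
  have hmono : ∀ t r : ℝ, 0 ≤ r → r ≤ M → Ffun t r ≤ 2*(M/(1+t^2*M)) := by
    intro t r h0 hrM
    apply mul_le_mul_of_nonneg_left _ (by norm_num)
    rw [div_le_div_iff₀ (Fden_pos t r h0) (Fden_pos t M (h0.trans hrM))]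
    nlinarith [sq_nonneg t]
  have hbound_int : Integrable (fun t : ℝ => 2*(M/(1+t^2*M))) (volume.restrict (Ioi 0)) := by
    rcases eq_or_lt_of_le (norm_nonneg B) with hM0 | hM0
    · have h0 : (fun t : ℝ => 2*(M/(1+t^2*M))) = fun _ => 0 := by
        funext t; rw [hM, ← hM0]; simp
      rw [h0]; exact integrable_zero _ _ _
    · have hs : 0 < Real.sqrt M := sqrt_pos.mpr hM0
      have h0 : (fun t : ℝ => 2*(M/(1+t^2*M))) =
          fun t => (2*M) * (1+(Real.sqrt M*t)^2)⁻¹ := by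
        funext t
        have h2 : (Real.sqrt M*t)^2 = t^2*M := by rw [mul_pow, sq_sqrt hM0.le]; ring
        rw [h2, div_eq_mul_inv]; ring
      rw [h0]
      exact ((integrable_inv_one_add_sq.comp_mul_left' hs.ne').const_mul (2*M)).restrict
  have hnorm : ∀ t : ℝ, ‖Fc t‖ ≤ 2*(M/(1+t^2*M)) := by
    intro t
    rw [ContinuousMap.norm_le _ (by positivity)]
    rintro ⟨r, hr⟩
    have h0 := spec_nonneg B hB0 r hr
    have hrM : r ≤ M := le_trans (le_abs_self r)
      (by simpa using spectrum.norm_le_norm_of_mem hr)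
    have hF0 : 0 ≤ Ffun t r :=
      mul_nonneg (by norm_num) (div_nonneg h0 (Fden_pos t r h0).le)
    rw [Real.norm_eq_abs]
    show |Ffun t r| ≤ 2*(M/(1+t^2*M))
    rw [abs_of_nonneg hF0]
    exact hmono t r h0 hrM
  have hFcInt : Integrable (fun t => Fc t) (volume.restrict (Ioi 0)) :=
    Integrable.mono' hbound_int ((map_continuous Fc).aestronglyMeasurable)
      (Filter.Eventually.of_forall hnorm)
  have conj1 : Integrable (fun t : ℝ => cfc (Ffun t) B) (volume.restrict (Ioi 0)) :=
    ((cfcL (R := ℝ) (a := B) hBsa).integrable_comp hFcInt).congr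
      (Filter.Eventually.of_forall fun t => (hFc_eq t).symm)
  refine ⟨conj1, ?_⟩
  set sqrtc : C(spectrum ℝ B, ℝ) := ⟨fun r => Real.sqrt r, by fun_prop⟩ with hsq
  have hkey : (∫ t in Ioi (0:ℝ), Fc t) = Real.pi • sqrtc := by
    ext r
    rw [ContinuousMap.integral_apply hFcInt r]
    show (∫ t in Ioi (0:ℝ), Ffun t r) = (Real.pi • sqrtc) r
    rw [ContinuousMap.smul_apply, smul_eq_mul]
    exact scalar_int (spec_nonneg B hB0 r r.2)
  have hsqrt : cfc Real.sqrt B = cfcL (R := ℝ) (a := B) hBsa sqrtc := by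
    rw [cfc_apply Real.sqrt B hBsa (by fun_prop)]
    simp only [cfcL_apply]
    exact congrArg _ (ContinuousMap.ext fun r => rfl)
  calc ∫ t in Ioi (0:ℝ), cfc (Ffun t) B
      = ∫ t in Ioi (0:ℝ), cfcL (R := ℝ) (a := B) hBsa (Fc t) :=
        integral_congr_ae (Filter.Eventually.of_forall fun t => hFc_eq t)
    _ = cfcL (R := ℝ) (a := B) hBsa (∫ t in Ioi (0:ℝ), Fc t) :=
        cfcL_integral B _ hFcInt hBsa
    _ = Real.pi • cfcL (R := ℝ) (a := B) hBsa sqrtc := by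
        rw [hkey]; exact _root_.map_smul _ _ _
    _ = Real.pi • cfc Real.sqrt B := by rw [hsqrt]

end Core

/-- For a closed densely defined operator `T` and any `x`,
`(1+T*T)^(-1/2) x = (1/π) ∫₁^∞ (mu-1)^(-1/2) (mu+T*T)⁻¹ x dmu` as a norm-convergent
(Bochner) integral. -/
theorem statement_3 {H : Type*} [NormedAddCommGroup H] [InnerProductSpace ℂ H]
    [CompleteSpace H] (T : H →ₗ.[ℂ] H)
    (hdense : Dense (T.domain : Set H)) (hclosed : IsClosed (T.graph : Set (H × H)))
    (R : ℝ → (H →L[ℂ] H)) (hR : ∀ mu : ℝ, 1 ≤ mu → IsResolvent T mu (R mu))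
    (S : H →L[ℂ] H) (hS : IsSqrtResolvent T 1 S) :
    ∀ x : H,
      MeasureTheory.IntegrableOn
        (fun mu : ℝ => ((mu - 1) ^ (-(1 : ℝ) / 2) : ℝ) • R mu x) (Set.Ioi 1) ∧
      S x = (1 / Real.pi) •
        ∫ mu in Set.Ioi (1 : ℝ), ((mu - 1) ^ (-(1 : ℝ) / 2) : ℝ) • R mu x := by
  intro x
  rcases subsingleton_or_nontrivial H with hH | hH
  · have h0 : (fun mu : ℝ => ((mu - 1) ^ (-(1 : ℝ) / 2) : ℝ) • R mu x) = fun _ => (0:H) :=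
      funext fun m => Subsingleton.elim _ _
    rw [h0]
    exact ⟨integrableOn_zero, Subsingleton.elim _ _⟩
  have hB1 : IsResolvent T 1 (R 1) := hR 1 le_rfl
  set B := R 1 with hBdef
  have hBsym : ∀ u v : H, ⟪u, B v⟫_ℂ = ⟪B u, v⟫_ℂ := fun u v => res_pairing hB1 hB1 u v
  have hBsa : IsSelfAdjoint B :=
    ContinuousLinearMap.isSelfAdjoint_iff_isSymmetric.mpr fun u v => (hBsym u v).symm
  have hB0 : (0 : H →L[ℂ] H) ≤ B := by
    rw [ContinuousLinearMap.nonneg_iff_isPositive]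
    refine ⟨ContinuousLinearMap.isSelfAdjoint_iff_isSymmetric.mp hBsa, fun v => ?_⟩
    obtain ⟨hv, Hv⟩ := hB1 v
    have e : ⟪T ⟨B v, hv⟩, T ⟨B v, hv⟩⟫_ℂ + ((1:ℝ) : ℂ) * ⟪B v, B v⟫_ℂ = ⟪v, B v⟫_ℂ :=
      Hv ⟨B v, hv⟩
    have h1 : 0 ≤ (⟪v, B v⟫_ℂ).re := by
      rw [← e]
      simp only [Complex.add_re, Complex.ofReal_one, one_mul]
      have ha : 0 ≤ (⟪(T ⟨B v, hv⟩ : H), (T ⟨B v, hv⟩ : H)⟫_ℂ).re := by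
        simpa using inner_self_nonneg (𝕜 := ℂ) (x := (T ⟨B v, hv⟩ : H))
      have hb : 0 ≤ (⟪B v, B v⟫_ℂ).re := by
        simpa using inner_self_nonneg (𝕜 := ℂ) (x := B v)
      linarith
    show 0 ≤ ContinuousLinearMap.reApplyInnerSelf B v
    rw [ContinuousLinearMap.reApplyInnerSelf_apply, inner_re_symm]
    simpa using h1
  have hBinj : ∀ v : H, B v = 0 → v = 0 := by
    intro v hv0
    obtain ⟨hv, Hv⟩ := hB1 v
    refine hdense.eq_zero_of_inner_left (𝕜 := ℂ) (h := fun y' hy' => ?_)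
    obtain ⟨y, rfl⟩ : ∃ y : T.domain, (y : H) = y' := ⟨⟨y', hy'⟩, rfl⟩
    have e : ⟪T ⟨B v, hv⟩, T y⟫_ℂ + ((1:ℝ) : ℂ) * ⟪B v, (y : H)⟫_ℂ = ⟪v, (y : H)⟫_ℂ := Hv y
    have hz : (⟨B v, hv⟩ : T.domain) = 0 := Subtype.ext hv0
    rw [hz, hv0] at e
    simp only [map_zero, inner_zero_left, inner_zero_right, zero_add, mul_zero, add_zero] at e
    simpa using e.symm
  have hSS : S * S = B := res_unique hS.2.2 hB1
  have hSsa : IsSelfAdjoint S :=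
    ContinuousLinearMap.isSelfAdjoint_iff_isSymmetric.mpr fun u v => hS.1 u v
  have hS0 : (0 : H →L[ℂ] H) ≤ S := by
    rw [ContinuousLinearMap.nonneg_iff_isPositive]
    refine ⟨ContinuousLinearMap.isSelfAdjoint_iff_isSymmetric.mp hSsa, fun v => ?_⟩
    show 0 ≤ ContinuousLinearMap.reApplyInnerSelf S v
    rw [ContinuousLinearMap.reApplyInnerSelf_apply]
    simpa using hS.2.1 v
  have hsqS : cfc Real.sqrt B = S := by
    have hXX : cfc Real.sqrt B * cfc Real.sqrt B = B := by
      rw [← cfc_mul Real.sqrt Real.sqrt B (by fun_prop) (by fun_prop)]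
      have h2 : cfc (fun x : ℝ => Real.sqrt x * Real.sqrt x) B = cfc (fun x : ℝ => x) B :=
        cfc_congr fun r hr => Real.mul_self_sqrt (spec_nonneg B hB0 r hr)
      rw [h2, cfc_id' ℝ B]
    have hX0 : 0 ≤ cfc Real.sqrt B := cfc_nonneg fun r _ => Real.sqrt_nonneg r
    exact (CFC.sqrt_unique hXX hX0).symm.trans (CFC.sqrt_unique hSS hS0)
  have key_t : ∀ t : ℝ, 0 < t → cfc (Ffun t) B = (2:ℝ) • R (1+t^2) := by
    intro t ht
    have hmu : (1:ℝ) ≤ 1 + t^2 := by nlinarith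
    have hRt := hR (1+t^2) hmu
    have hCR : (1 + t^2 • B) * R (1+t^2) = B := by
      ext v
      have hid1 := res_id hRt hB1 v
      rw [show ((1+t^2) - 1 : ℝ) = t^2 by ring] at hid1
      simp only [ContinuousLinearMap.mul_apply, ContinuousLinearMap.add_apply,
        ContinuousLinearMap.one_apply, ContinuousLinearMap.smul_apply]
      rw [hid1]
      abel
    have hRC : R (1+t^2) * (1 + t^2 • B) = B := by
      ext v
      have hid2 := res_id hB1 hRt v
      rw [show (1 - (1+t^2) : ℝ) = -(t^2) by ring, neg_smul] at hid2
      have h' : t^2 • R (1+t^2) (B v) = B v - R (1+t^2) v := by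
        rw [← neg_neg (t^2 • R (1+t^2) (B v)), hid2]; abel
      simp only [ContinuousLinearMap.mul_apply, ContinuousLinearMap.add_apply,
        ContinuousLinearMap.one_apply, ContinuousLinearMap.smul_apply, map_add,
        ContinuousLinearMap.map_smul_of_tower]
      rw [h']
      abel
    obtain ⟨hmul, hcomm⟩ := core_mul B hBsa hB0 t
    have h1 : cfc (Ffun t) B * B = (2:ℝ) • (B * R (1+t^2)) := by
      calc cfc (Ffun t) B * B
          = cfc (Ffun t) B * ((1 + t^2 • B) * R (1+t^2)) := by rw [hCR]
        _ = (cfc (Ffun t) B * (1 + t^2 • B)) * R (1+t^2) := by rw [mul_assoc]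
        _ = ((2:ℝ) • B) * R (1+t^2) := by rw [hmul]
        _ = (2:ℝ) • (B * R (1+t^2)) := by rw [smul_mul_assoc]
    have h2 : B * cfc (Ffun t) B = B * ((2:ℝ) • R (1+t^2)) := by
      rw [← hcomm, h1, mul_smul_comm]
    have h3 : ∀ v : H, B ((cfc (Ffun t) B) v - ((2:ℝ) • R (1+t^2)) v) = 0 := by
      intro v
      have h4 := congrArg (fun (L : H →L[ℂ] H) => L v) h2
      simp only [ContinuousLinearMap.mul_apply] at h4
      rw [map_sub, h4, sub_self]
    ext v
    exact sub_eq_zero.mp (hBinj _ (h3 v))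
  obtain ⟨hint, hval⟩ := core_int B hBsa hB0
  have hval' : ∫ t in Ioi (0:ℝ), cfc (Ffun t) B = Real.pi • S := by rw [hval, hsqS]
  have hGvInt : Integrable (fun t : ℝ => cfc (Ffun t) B x) (volume.restrict (Ioi 0)) :=
    hint.apply_continuousLinearMap x
  have hderiv : ∀ t ∈ Ioi (0:ℝ), HasDerivWithinAt (fun s : ℝ => 1 + s^2) (2*t) (Ioi 0) t := by
    intro t ht
    simpa using ((hasDerivAt_pow 2 t).const_add 1).hasDerivWithinAt
  have hinj : InjOn (fun s : ℝ => 1 + s^2) (Ioi 0) := by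
    intro a ha b hb hab
    simp only at hab
    have ha' : (0:ℝ) < a := ha
    have hb' : (0:ℝ) < b := hb
    nlinarith [sq_nonneg (a-b), sq_nonneg (a+b)]
  have himg : (fun s : ℝ => 1 + s^2) '' (Ioi 0) = Ioi 1 := by
    ext m
    constructor
    · rintro ⟨t, ht, rfl⟩
      have ht' : (0:ℝ) < t := ht
      simp only [mem_Ioi]
      nlinarith
    · intro hm
      have h1 : (0:ℝ) < m - 1 := by simp only [mem_Ioi] at hm; linarith
      refine ⟨Real.sqrt (m - 1), mem_Ioi.mpr (Real.sqrt_pos.mpr h1), ?_⟩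
      show 1 + (Real.sqrt (m-1))^2 = m
      rw [Real.sq_sqrt h1.le]; ring
  have hpt : ∀ t ∈ Ioi (0:ℝ),
      |2*t| • (((1+t^2) - 1 : ℝ) ^ (-(1:ℝ)/2)) • R (1+t^2) x = cfc (Ffun t) B x := by
    intro t ht
    have ht' : (0:ℝ) < t := ht
    have hc : ((1+t^2) - 1 : ℝ) ^ (-(1:ℝ)/2) = t⁻¹ := by
      rw [show ((1+t^2) - 1 : ℝ) = t^2 by ring, ← Real.rpow_natCast t 2,
        ← Real.rpow_mul ht'.le, show ((2:ℕ):ℝ) * (-(1:ℝ)/2) = -1 by norm_num,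
        Real.rpow_neg_one]
    rw [hc, abs_of_pos (by positivity), smul_smul,
      show (2*t) * t⁻¹ = 2 by field_simp, key_t t ht']
    simp [ContinuousLinearMap.smul_apply]
  have hIntg : MeasureTheory.IntegrableOn
      (fun mu : ℝ => ((mu - 1) ^ (-(1 : ℝ) / 2) : ℝ) • R mu x) (Ioi 1) := by
    rw [← himg, integrableOn_image_iff_integrableOn_abs_deriv_smul
      measurableSet_Ioi hderiv hinj]
    exact hGvInt.congr ((ae_restrict_iff' measurableSet_Ioi).mpr
      (Filter.Eventually.of_forall fun t ht => (hpt t ht).symm))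
  refine ⟨hIntg, ?_⟩
  have hval2 : (∫ mu in Ioi (1:ℝ), ((mu - 1) ^ (-(1 : ℝ) / 2) : ℝ) • R mu x)
      = Real.pi • S x := by
    rw [← himg, integral_image_eq_integral_abs_deriv_smul measurableSet_Ioi hderiv hinj,
      setIntegral_congr_fun measurableSet_Ioi (fun t ht => hpt t ht),
      ← ContinuousLinearMap.integral_apply hint x, hval']
    simp
  rw [hval2, smul_smul, one_div, inv_mul_cancel₀ Real.pi_ne_zero, one_smul]
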